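/- In the DGA A, the homology class ā₀·c̄ belongs to the indeterminacy of the threefold bracket ⟨ā₀,ā₁,ā₂⟩: both a₁₂ and a₁₂ + c satisfy d(x) = a₁a₂, and the corresponding bracket representatives a₀a₁₂ + a₀₁a₂ and a₀(a₁₂+c) + a₀₁a₂ differ in homology by the class of a₀c, which is a nonzero cycle that is not a boundary. -/
import Mathlib


open MvPolynomial

/-- The polynomial algebra over F₂ on generators
a₀, a₁, a₂, a₃, a₀₁, a₁₂, a₂₃, c, a₀₂, a₁₃ (indices 0,…,9). -/
abbrev P : Type := MvPolynomial (Fin 10) (ZMod 2)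

/-- Values of the differential of A on the generators:
d(a₀)=d(a₁)=d(a₂)=d(a₃)=d(c)=0, d(a₀₁)=a₀a₁, d(a₁₂)=a₁a₂, d(a₂₃)=a₂a₃,
d(a₀₂)=a₀a₁₂+a₀₁a₂, d(a₁₃)=a₁a₂₃+a₁₂a₃. -/
noncomputable def dvalA : Fin 10 → P :=
  ![0, 0, 0, 0, X 0 * X 1, X 1 * X 2, X 2 * X 3, 0,
    X 0 * X 5 + X 4 * X 2, X 1 * X 6 + X 5 * X 3]

/-- The differential of A: the unique F₂-linear derivation with the values
`dvalA` on the generators (Leibniz rule holds automatically). -/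
noncomputable def dA : P → P := fun p => mkDerivation (ZMod 2) dvalA p

/-- Evaluation at a₀ = c = 1, all other generators 0. -/
noncomputable def phiA : P →ₐ[ZMod 2] ZMod 2 :=
  aeval (fun i : Fin 10 => if i = 0 ∨ i = 7 then 1 else 0)

lemma e0 : dvalA 0 = 0 := by rw [dvalA]; rfl
lemma e1 : dvalA 1 = 0 := by rw [dvalA]; rfl
lemma e2 : dvalA 2 = 0 := by rw [dvalA]; rfl
lemma e3 : dvalA 3 = 0 := by rw [dvalA]; rfl
lemma e4 : dvalA 4 = X 0 * X 1 := by rw [dvalA]; rfl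
lemma e5 : dvalA 5 = X 1 * X 2 := by rw [dvalA]; rfl
lemma e6 : dvalA 6 = X 2 * X 3 := by rw [dvalA]; rfl
lemma e7 : dvalA 7 = 0 := by rw [dvalA]; rfl
lemma e8 : dvalA 8 = X 0 * X 5 + X 4 * X 2 := by rw [dvalA]; rfl
lemma e9 : dvalA 9 = X 1 * X 6 + X 5 * X 3 := by rw [dvalA]; rfl

lemma phiA_dvalA (i : Fin 10) : phiA (dvalA i) = 0 := by
  fin_cases i <;> simp [e0, e1, e2, e3, e4, e5, e6, e7, e8, e9, phiA]

lemma phiA_dA (u : P) : phiA (dA u) = 0 := by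
  induction u using MvPolynomial.induction_on with
  | C a =>
      have : dA (C a : P) = 0 := by
        simpa [dA] using
          (mkDerivation (ZMod 2) dvalA).map_algebraMap (R := ZMod 2) a
      simp [this]
  | add p q hp hq =>
      have : dA (p + q) = dA p + dA q := by simp [dA]
      simp [this, hp, hq]
  | mul_X p i hp =>
      have : dA (p * X i) = p * dvalA i + dA p * X i := by
        simp [dA, Derivation.leibniz, mkDerivation_X]
        ring
      simp [this, hp, phiA_dvalA]

/-- In A, both a₁₂ and a₁₂ + c are admissible choices, and the corresponding
representatives of ⟨ā₀,ā₁,ā₂⟩ differ by a₀c, which is a nonzero cycle that is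
not a boundary; hence ā₀c̄ lies in the indeterminacy of ⟨ā₀,ā₁,ā₂⟩. -/
theorem stmt_14 :
    dA (X 5) = X 1 * X 2 ∧
    dA (X 5 + X 7) = X 1 * X 2 ∧
    ((X 0 * (X 5 + X 7) + X 4 * X 2) + (X 0 * X 5 + X 4 * X 2) : P) = X 0 * X 7 ∧
    dA (X 0 * X 7) = 0 ∧
    (X 0 * X 7 : P) ≠ 0 ∧
    ¬ ∃ u : P, dA u = X 0 * X 7 := by
  have hphi : phiA (X 0 * X 7 : P) = 1 := by simp [phiA]
  refine ⟨?_, ?_, ?_, ?_, ?_, ?_⟩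
  · simp [dA, mkDerivation_X, e5]
  · simp [dA, mkDerivation_X, e5, e7]
  · have h2 : (2 : P) = 0 := CharTwo.two_eq_zero
    ring_nf
    rw [h2]
    ring
  · simp [dA, Derivation.leibniz, mkDerivation_X, e0, e7]
  · intro h
    rw [h] at hphi
    simp at hphi
  · rintro ⟨u, hu⟩
    have := phiA_dA u
    rw [hu, hphi] at this
    exact one_ne_zero this
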